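/- Let F be a CNF formula with Boolean variables x_1,…,x_{n_x} and clauses C_1,…,C_{n_c}. Let T_i = {j : x_i appears positively in C_j} and F_i = {j : x_i appears negatively in C_j}. Consider spanner variables v_{i,j} for i ∈ [n_x], j ∈ [n_c] and an extra variable a, and define on the empty document ε: (i) the mappings of r_valid are, for each truth assignment b : [n_x] → {true, false}, the mapping that assigns v_{i,j} := [0,0⟩ for all j ∈ T_i when b(i) = true and for all j ∈ F_i when b(i) = false, and assigns nothing else; (ii) the mappings of r_mask are, for each k ∈ [n_c], the mapping assigning a := [0,0⟩ and v_{i,j} := [0,0⟩ for all i ∈ [n_x] and all j ∈ [n_c] \ {k}. Let M be the union of these two sets of mappings. Then F is satisfiable if and only if the set of mappings of M that are maximal under the variable inclusion domination relation has at least n_c + 1 elements. -/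

import Mathlib

namespace DocSpanners

/-- A span: a pair of endpoint positions `[i, j⟩`. -/
abbrev Span : Type := ℕ × ℕ

/-- `s` is a span of document `d`. -/
def IsSpanOf {α : Type} (d : List α) (s : Span) : Prop :=
  s.1 ≤ s.2 ∧ s.2 ≤ d.length

/-- A (schemaless) mapping over variable type `V`: a partial assignment of spans. -/
abbrev Mapping (V : Type) : Type := V → Option Span

/-- `m` is a mapping of document `d`. -/
def MappingOf {α V : Type} (d : List α) (m : Mapping V) : Prop :=
  ∀ x s, m x = some s → IsSpanOf d s

/-- A spanner: maps documents to sets of mappings. -/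
abbrev Spanner (α V : Type) : Type := List α → Set (Mapping V)

/-- Labels of a variable-set automaton: letters and variable markers. -/
inductive Label (α V : Type) : Type where
  | letter (a : α)
  | vopen (x : V)
  | vclose (x : V)
deriving DecidableEq

/-- The sequence of letters of a ref-word. -/
def letters {α V : Type} (w : List (Label α V)) : List α :=
  w.filterMap fun l => match l with
    | Label.letter a => some a
    | _ => none

/-- A ref-word is valid if for each variable, either its markers do not appear, or
the opening and closing markers appear exactly once with the opening first. -/
def ValidRef {α V : Type} [DecidableEq α] [DecidableEq V] (w : List (Label α V)) : Prop :=
  ∀ x : V,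
    (Label.vopen x ∉ w ∧ Label.vclose x ∉ w) ∨
    (w.count (Label.vopen x) = 1 ∧ w.count (Label.vclose x) = 1 ∧
      w.idxOf (Label.vopen x) < w.idxOf (Label.vclose x))

/-- The mapping defined by a (valid) ref-word: each marked variable is sent to the
span delimited by the positions at which its markers are read. -/
def refMapping {α V : Type} [DecidableEq α] [DecidableEq V] (w : List (Label α V)) :
    Mapping V := fun x =>
  if Label.vopen x ∈ w then
    some ((letters (w.take (w.idxOf (Label.vopen x)))).length,
          (letters (w.take (w.idxOf (Label.vclose x)))).length)
  else none

/-- A variable-set automaton with state type `Q`. -/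
structure VA (α V Q : Type) : Type where
  init : Q
  final : Set Q
  trans : Q → Label α V → Q → Prop

/-- Paths in a VA. -/
inductive VA.Path {α V Q : Type} (A : VA α V Q) : Q → List (Label α V) → Q → Prop where
  | nil (q : Q) : VA.Path A q [] q
  | cons {q q' q'' : Q} {l : Label α V} {w : List (Label α V)} :
      A.trans q l q' → VA.Path A q' w q'' → VA.Path A q (l :: w) q''

/-- The VA accepts the ref-word `w` (an accepting run reads `w`). -/
def VA.AcceptsRef {α V Q : Type} (A : VA α V Q) (w : List (Label α V)) : Prop :=
  ∃ qf ∈ A.final, A.Path A.init w qf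

/-- A VA is sequential if every accepting run is valid. -/
def VA.Sequential {α V Q : Type} [DecidableEq α] [DecidableEq V] (A : VA α V Q) : Prop :=
  ∀ w, A.AcceptsRef w → ValidRef w

/-- The spanner defined by a (sequential) VA. -/
def VA.spanner {α V Q : Type} [DecidableEq α] [DecidableEq V] (A : VA α V Q) :
    Spanner α V := fun d =>
  {m | ∃ w, A.AcceptsRef w ∧ letters w = d ∧ refMapping w = m}

/-- A spanner is regular if it is defined by some sequential VA with finitely many states. -/
def IsRegular {α V : Type} [DecidableEq α] [DecidableEq V] (P : Spanner α V) : Prop :=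
  ∃ (Q : Type) (_ : Fintype Q) (A : VA α V Q), A.Sequential ∧ A.spanner = P

/-- The skyline operator: keep only the mappings of `P d` that are maximal under `R d`. -/
def skyline {α V : Type} (P : Spanner α V)
    (R : List α → Mapping V → Mapping V → Prop) : Spanner α V := fun d =>
  {m | m ∈ P d ∧ ∀ m' ∈ P d, m' ≠ m → ¬ R d m m'}

/-- The variable inclusion domination relation: `m2` extends `m1`. -/
def varIncRel {V : Type} (m1 m2 : Mapping V) : Prop :=
  ∀ x s, m1 x = some s → m2 x = some s

/-- Two mappings have the same domain. -/
def sameDom {V : Type} (m1 m2 : Mapping V) : Prop :=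
  ∀ x, m1 x = none ↔ m2 x = none

/-- The span inclusion domination relation. -/
def spanIncRel {V : Type} (m1 m2 : Mapping V) : Prop :=
  sameDom m1 m2 ∧
    ∀ x s1 s2, m1 x = some s1 → m2 x = some s2 → s2.1 ≤ s1.1 ∧ s1.2 ≤ s2.2

/-- The left-to-right domination relation: same start, `m2` no shorter. -/
def ltrRel {V : Type} (m1 m2 : Mapping V) : Prop :=
  sameDom m1 m2 ∧
    ∀ x s1 s2, m1 x = some s1 → m2 x = some s2 →
      s1.1 = s2.1 ∧ s1.2 - s1.1 ≤ s2.2 - s2.1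

/-- The span length domination relation: `m2`'s spans are no shorter. -/
def spanLenRel {V : Type} (m1 m2 : Mapping V) : Prop :=
  sameDom m1 m2 ∧
    ∀ x s1 s2, m1 x = some s1 → m2 x = some s2 → s1.2 - s1.1 ≤ s2.2 - s2.1


/-- The mapping of `r_valid` on the empty document corresponding to the truth
assignment `b`: it assigns `v_{i,j} := [0,0⟩` exactly when the assignment of `x_i`
under `b` makes it appear satisfyingly in clause `C_j`. -/
def validMap {nx nc : ℕ} (pos neg : Fin nx → Fin nc → Bool) (b : Fin nx → Bool) :
    Mapping ((Fin nx × Fin nc) ⊕ Unit) := fun y =>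
  match y with
  | Sum.inl (i, j) => if (b i && pos i j) || (!(b i) && neg i j) then some (0, 0) else none
  | Sum.inr _ => none

/-- The `k`-th mapping of `r_mask` on the empty document: it assigns `a := [0,0⟩` and
`v_{i,j} := [0,0⟩` for all `i` and all `j ≠ k`. -/
def maskMap {nx nc : ℕ} (k : Fin nc) : Mapping ((Fin nx × Fin nc) ⊕ Unit) := fun y =>
  match y with
  | Sum.inl (_, j) => if j = k then none else some (0, 0)
  | Sum.inr _ => some (0, 0)

/-- The union of the mappings of `r_valid` and `r_mask` on the empty document. -/
def allMaps {nx nc : ℕ} (pos neg : Fin nx → Fin nc → Bool) :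
    Set (Mapping ((Fin nx × Fin nc) ⊕ Unit)) :=
  {m | (∃ b, m = validMap pos neg b) ∨ ∃ k, m = maskMap k}

-- AUX
variable {nx nc : ℕ}

def Dom (pos neg : Fin nx → Fin nc → Bool) (b : Fin nx → Bool) : Finset (Fin nx × Fin nc) :=
  Finset.univ.filter fun p => ((b p.1 && pos p.1 p.2) || (!(b p.1) && neg p.1 p.2)) = true

lemma validMap_inl (pos neg : Fin nx → Fin nc → Bool) (b : Fin nx → Bool)
    (p : Fin nx × Fin nc) :
    validMap pos neg b (Sum.inl p) = if p ∈ Dom pos neg b then some (0, 0) else none := by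
  rcases p with ⟨i, j⟩
  simp [validMap, Dom, Finset.mem_filter]

lemma validMap_inr (pos neg : Fin nx → Fin nc → Bool) (b : Fin nx → Bool) (u : Unit) :
    validMap pos neg b (Sum.inr u) = none := rfl

lemma maskMap_inr (k : Fin nc) (u : Unit) :
    maskMap (nx := nx) k (Sum.inr u) = some (0, 0) := rfl

lemma validMap_ne_maskMap (pos neg : Fin nx → Fin nc → Bool) (b : Fin nx → Bool) (k : Fin nc) :
    validMap pos neg b ≠ maskMap k := by
  intro h
  have := congrFun h (Sum.inr ())
  simp [validMap_inr, maskMap_inr] at this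

lemma varInc_valid_iff (pos neg : Fin nx → Fin nc → Bool) (b b' : Fin nx → Bool) :
    varIncRel (validMap pos neg b) (validMap pos neg b') ↔ Dom pos neg b ⊆ Dom pos neg b' := by
  constructor
  · intro h p hp
    have h2 := h (Sum.inl p) (0, 0) (by rw [validMap_inl]; simp [hp])
    rw [validMap_inl] at h2
    by_contra hc
    simp [hc] at h2
  · intro h x s hs
    cases x with
    | inr u => simp [validMap_inr] at hs
    | inl p =>
      rw [validMap_inl] at hs ⊢
      by_cases hp : p ∈ Dom pos neg b
      · simp [hp] at hs; simp [h hp, hs]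
      · simp [hp] at hs

lemma validMap_eq_iff (pos neg : Fin nx → Fin nc → Bool) (b b' : Fin nx → Bool) :
    validMap pos neg b = validMap pos neg b' ↔ Dom pos neg b = Dom pos neg b' := by
  constructor
  · intro h
    ext p
    have := congrFun h (Sum.inl p)
    rw [validMap_inl, validMap_inl] at this
    by_cases hp : p ∈ Dom pos neg b <;> by_cases hq : p ∈ Dom pos neg b' <;>
      simp [hp, hq] at this ⊢
  · intro h
    funext x
    cases x with
    | inr u => rfl
    | inl p => rw [validMap_inl, validMap_inl, h]

lemma mem_Dom_iff (pos neg : Fin nx → Fin nc → Bool) (b : Fin nx → Bool)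
    (i : Fin nx) (j : Fin nc) :
    (i, j) ∈ Dom pos neg b ↔
      ((pos i j = true ∧ b i = true) ∨ (neg i j = true ∧ b i = false)) := by
  simp only [Dom, Finset.mem_filter, Finset.mem_univ, true_and]
  cases h : b i <;> simp [h]


lemma maskMap_injective (i0 : Fin nx) :
    Function.Injective (maskMap (nx := nx) (nc := nc)) := by
  intro k k' h
  by_contra hne
  have := congrFun h (Sum.inl (i0, k'))
  simp [maskMap, hne] at this
  exact hne this.symm

lemma maskMap_maximal (pos neg : Fin nx → Fin nc → Bool) (i0 : Fin nx) (k : Fin nc)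
    (m' : Mapping ((Fin nx × Fin nc) ⊕ Unit)) (hm' : m' ∈ allMaps pos neg)
    (hne : m' ≠ maskMap k) : ¬ varIncRel (maskMap k) m' := by
  intro h
  rcases hm' with ⟨b, rfl⟩ | ⟨k', rfl⟩
  · have := h (Sum.inr ()) (0, 0) rfl
    simp [validMap_inr] at this
  · have hkk : k' ≠ k := fun hE => hne (by rw [hE])
    have := h (Sum.inl (i0, k')) (0, 0) (by simp [maskMap, hkk])
    simp [maskMap] at this


/-- For a CNF `F` (variable `x_i` appears positively in clause `C_j`
iff `pos i j`, negatively iff `neg i j`): `F` is satisfiable iff the set of mappings of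
`M` that are maximal under variable inclusion has at least `n_c + 1` elements. -/
theorem satisfiable_iff_skyline_large (nx nc : ℕ) (pos neg : Fin nx → Fin nc → Bool) :
    (∃ b : Fin nx → Bool, ∀ j : Fin nc, ∃ i : Fin nx,
        (pos i j = true ∧ b i = true) ∨ (neg i j = true ∧ b i = false)) ↔
      nc + 1 ≤
        {m ∈ allMaps pos neg |
          ∀ m' ∈ allMaps pos neg, m' ≠ m → ¬ varIncRel m m'}.ncard := by
  classical
  set S := {m ∈ allMaps pos neg |
          ∀ m' ∈ allMaps pos neg, m' ≠ m → ¬ varIncRel m m'} with hS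
  have hSsub : S ⊆ Set.range (validMap pos neg) ∪ Set.range (maskMap (nx := nx)) := by
    rintro m ⟨hm, -⟩
    rcases hm with ⟨b, rfl⟩ | ⟨k, rfl⟩
    · exact Or.inl ⟨b, rfl⟩
    · exact Or.inr ⟨k, rfl⟩
  have hSfin : S.Finite :=
    Set.Finite.subset ((Set.finite_range _).union (Set.finite_range _)) hSsub
  constructor
  · rintro ⟨b, hb⟩
    rcases Nat.eq_zero_or_pos nc with hnc | hnc
    · -- nc = 0 : show 1 ≤ S.ncard
      subst hnc
      have hmem : validMap pos neg b ∈ S := by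
        refine ⟨Or.inl ⟨b, rfl⟩, ?_⟩
        intro m' hm' hne _
        apply hne
        rcases hm' with ⟨b', rfl⟩ | ⟨k, rfl⟩
        · funext x
          cases x with
          | inr u => rfl
          | inl p => exact p.2.elim0
        · exact k.elim0
      have : S.Nonempty := ⟨_, hmem⟩
      exact (Set.ncard_pos hSfin).2 this
    · obtain ⟨i0, -⟩ := hb ⟨0, hnc⟩
      -- choose b* with maximal domain among extensions of b
      obtain ⟨b', hb'mem, hb'max⟩ := Finset.exists_max_image
        (Finset.univ.filter fun b' => Dom pos neg b ⊆ Dom pos neg b')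
        (fun b' => (Dom pos neg b').card)
        ⟨b, by simp⟩
      simp only [Finset.mem_filter, Finset.mem_univ, true_and] at hb'mem
      have hb'sat : ∀ j : Fin nc, ∃ i : Fin nx, (i, j) ∈ Dom pos neg b' := by
        intro j
        obtain ⟨i, hi⟩ := hb j
        exact ⟨i, hb'mem ((mem_Dom_iff pos neg b i j).2 hi)⟩
      have hvmax : validMap pos neg b' ∈ S := by
        refine ⟨Or.inl ⟨b', rfl⟩, ?_⟩
        rintro m' hm' hne hinc
        rcases hm' with ⟨b'', rfl⟩ | ⟨k, rfl⟩
        · have hsub : Dom pos neg b' ⊆ Dom pos neg b'' :=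
            (varInc_valid_iff pos neg b' b'').1 hinc
          have hssub : Dom pos neg b' ⊂ Dom pos neg b'' :=
            hsub.ssubset_of_ne fun hE =>
              hne ((validMap_eq_iff pos neg b'' b').2 hE.symm)
          have hle := hb'max b'' (by
            simp only [Finset.mem_filter, Finset.mem_univ, true_and]
            exact hb'mem.trans hsub)
          exact absurd (Finset.card_lt_card hssub) (not_lt.2 hle)
        · obtain ⟨i, hi⟩ := hb'sat k
          have := hinc (Sum.inl (i, k)) (0, 0) (by rw [validMap_inl]; simp [hi])
          simp [maskMap] at this
      -- count: {validMap b'} ∪ range maskMap ⊆ S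
      have hmaskS : ∀ k : Fin nc, maskMap (nx := nx) k ∈ S := by
        intro k
        exact ⟨Or.inr ⟨k, rfl⟩, fun m' hm' hne => maskMap_maximal pos neg i0 k m' hm' hne⟩
      have hTsub : insert (validMap pos neg b') (Set.range (maskMap (nx := nx) (nc := nc))) ⊆ S := by
        rintro m (rfl | ⟨k, rfl⟩)
        · exact hvmax
        · exact hmaskS k
      have hnotmem : validMap pos neg b' ∉ Set.range (maskMap (nx := nx) (nc := nc)) := by
        rintro ⟨k, hk⟩
        exact validMap_ne_maskMap pos neg b' k hk.symm
      have hrange : (Set.range (maskMap (nx := nx) (nc := nc))).ncard = nc := by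
        rw [← Set.image_univ, Set.ncard_image_of_injective _ (maskMap_injective i0),
          Set.ncard_univ]
        simp
      have hcard : (insert (validMap pos neg b')
          (Set.range (maskMap (nx := nx) (nc := nc)))).ncard = nc + 1 := by
        rw [Set.ncard_insert_of_notMem hnotmem (Set.finite_range _), hrange]
      calc nc + 1 = _ := hcard.symm
        _ ≤ S.ncard := Set.ncard_le_ncard hTsub hSfin
  · intro h
    have hvalid : ∃ b, validMap pos neg b ∈ S := by
      by_contra hc
      push_neg at hc
      have hsub : S ⊆ Set.range (maskMap (nx := nx) (nc := nc)) := by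
        rintro m hm
        rcases hm.1 with ⟨b, rfl⟩ | ⟨k, rfl⟩
        · exact absurd hm (hc b)
        · exact ⟨k, rfl⟩
      have h1 : S.ncard ≤ (Set.range (maskMap (nx := nx) (nc := nc))).ncard :=
        Set.ncard_le_ncard hsub (Set.finite_range _)
      have h2 : (Set.range (maskMap (nx := nx) (nc := nc))).ncard ≤ nc := by
        rw [← Set.image_univ]
        calc ((maskMap (nx := nx) (nc := nc)) '' Set.univ).ncard
            ≤ (Set.univ : Set (Fin nc)).ncard := Set.ncard_image_le Set.finite_univ
          _ = nc := by rw [Set.ncard_univ]; simp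
      omega
    obtain ⟨b, hbS⟩ := hvalid
    refine ⟨b, fun j => ?_⟩
    have hne : maskMap (nx := nx) j ≠ validMap pos neg b :=
      fun hE => validMap_ne_maskMap pos neg b j hE.symm
    have hninc := hbS.2 (maskMap j) (Or.inr ⟨j, rfl⟩) hne
    rw [varIncRel] at hninc
    push_neg at hninc
    obtain ⟨x, s, hx1, hx2⟩ := hninc
    cases x with
    | inr u => simp [validMap_inr] at hx1
    | inl p =>
      rcases p with ⟨i, j'⟩
      rw [validMap_inl] at hx1
      by_cases hp : (i, j') ∈ Dom pos neg b
      · simp only [hp, if_true, Option.some.injEq] at hx1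
        subst hx1
        have hj : j' = j := by
          by_contra hj
          exact hx2 (by simp [maskMap, hj])
        subst hj
        exact ⟨i, (mem_Dom_iff pos neg b i j').1 hp⟩
      · simp [hp] at hx1


end DocSpanners
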